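/- arXiv:2308.01027 — 3 statements merged into one kernel-verified Lean document; each statement's English description precedes it below -/
import Mathlib

section
/- Let (F_n) be a sequence of random cumulative distribution functions on ℝ and F a continuous-or-not cumulative distribution function such that for every fixed x ∈ ℝ, F_n(x) → F(x) in probability and F_n(x⁻) → F(x⁻) in probability (where g(x⁻) denotes the left limit of g at x). Then sup_{x ∈ ℝ} |F_n(x) − F(x)| converges to 0 in probability. -/
open MeasureTheory Filter Function

/-- Deterministic key lemma: a grid of near-quantile points controls the
Kolmogorov distance between two distribution functions. -/
lemma gc_pointwise_bound {F G : ℝ → ℝ} (hF : Monotone F) (hG : Monotone G)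
    (hF0 : ∀ x, 0 ≤ F x) (hG0 : ∀ x, 0 ≤ G x) (hF1 : ∀ x, F x ≤ 1) (hG1 : ∀ x, G x ≤ 1)
    {k : ℕ} (hk : 2 ≤ k) {q : ℕ → ℝ}
    (hq_ge : ∀ i, 1 ≤ i → i ≤ k - 1 → (i : ℝ) / k ≤ F (q i))
    (hq_le : ∀ i, 1 ≤ i → i ≤ k - 1 → leftLim F (q i) ≤ (i : ℝ) / k)
    {δ : ℝ}
    (herr : ∀ i, 1 ≤ i → i ≤ k - 1 → |G (q i) - F (q i)| ≤ δ ∧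
      |leftLim G (q i) - leftLim F (q i)| ≤ δ)
    (x : ℝ) : |G x - F x| ≤ δ + 1 / k := by
  have hkpos : (0 : ℝ) < k := by positivity
  have hk1 : 1 ≤ k - 1 := by omega
  have hδ : 0 ≤ δ := le_trans (abs_nonneg _) (herr 1 le_rfl hk1).1
  have hcast : ((k - 1 : ℕ) : ℝ) = (k : ℝ) - 1 := by
    push_cast [Nat.cast_sub (by omega : 1 ≤ k)]; ring
  rw [abs_sub_le_iff]
  by_cases h1 : x < q 1
  · -- left tail
    have hFle : F x ≤ leftLim F (q 1) := hF.le_leftLim h1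
    have hGle : G x ≤ leftLim G (q 1) := hG.le_leftLim h1
    have hLF : leftLim F (q 1) ≤ 1 / k := by
      have := hq_le 1 le_rfl hk1; simpa using this
    have herr1 := (herr 1 le_rfl hk1).2
    rw [abs_sub_le_iff] at herr1
    constructor
    · have := hF0 x; linarith [herr1.1]
    · have := hG0 x; linarith
  · by_cases h2 : q (k - 1) ≤ x
    · -- right tail
      have hFge : ((k - 1 : ℕ) : ℝ) / k ≤ F (q (k - 1)) := hq_ge (k - 1) hk1 le_rfl
      have hFx : F (q (k - 1)) ≤ F x := hF h2
      have hGx : G (q (k - 1)) ≤ G x := hG h2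
      have herr2 := (herr (k - 1) hk1 le_rfl).1
      rw [abs_sub_le_iff] at herr2
      have hfrac : 1 - 1 / (k : ℝ) ≤ ((k - 1 : ℕ) : ℝ) / k := by
        rw [hcast]; field_simp; exact le_rfl
      constructor
      · have := hG1 x; linarith [herr2.2]
      · have := hF1 x; linarith [herr2.2]
    · -- interior
      push_neg at h1 h2
      set T : Finset ℕ := (Finset.Icc 1 (k - 1)).filter (fun j => q j ≤ x) with hT
      have h1T : (1 : ℕ) ∈ T := by
        simp [hT, Finset.mem_filter, Finset.mem_Icc, hk1, h1]
      have hTne : T.Nonempty := ⟨1, h1T⟩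
      set i := T.max' hTne with hi
      have hiT : i ∈ T := T.max'_mem hTne
      have hi_mem : i ∈ Finset.Icc 1 (k - 1) ∧ q i ≤ x := by
        simpa [hT, Finset.mem_filter] using hiT
      obtain ⟨hi_icc, hqi⟩ := hi_mem
      rw [Finset.mem_Icc] at hi_icc
      have hine : i ≠ k - 1 := fun h => absurd (h ▸ hqi) (not_le.mpr h2)
      have hi1 : i + 1 ≤ k - 1 := by omega
      have hxlt : x < q (i + 1) := by
        by_contra h
        push_neg at h
        have : i + 1 ∈ T := by
          simp [hT, Finset.mem_filter, Finset.mem_Icc, h]; omega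
        have := T.le_max' _ this
        omega
      have hFge : (i : ℝ) / k ≤ F (q i) := hq_ge i hi_icc.1 (by omega)
      have hLle : leftLim F (q (i + 1)) ≤ ((i + 1 : ℕ) : ℝ) / k :=
        hq_le (i + 1) (by omega) hi1
      have herrA := (herr i hi_icc.1 (by omega)).1
      have herrB := (herr (i + 1) (by omega) hi1).2
      rw [abs_sub_le_iff] at herrA herrB
      have hFx1 : F x ≤ leftLim F (q (i + 1)) := hF.le_leftLim hxlt
      have hGx1 : G x ≤ leftLim G (q (i + 1)) := hG.le_leftLim hxlt
      have hFxi : F (q i) ≤ F x := hF hqi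
      have hGxi : G (q i) ≤ G x := hG hqi
      have hstep : ((i + 1 : ℕ) : ℝ) / k - (i : ℝ) / k = 1 / k := by
        push_cast; field_simp; ring
      constructor
      · -- G x - F x
        linarith [herrB.1]
      · -- F x - G x
        linarith [herrA.2]

/-- Lemma 5 (Glivenko–Cantelli in probability): if a sequence of random
distribution functions converges pointwise in probability to a distribution
function `F`, both at each point and at each left limit, then the Kolmogorov
distance converges to `0` in probability. -/
theorem glivenko_cantelli_in_probability
    {Ω : Type*} [MeasurableSpace Ω] (μ : Measure Ω) [IsProbabilityMeasure μ]
    (Fn : ℕ → Ω → ℝ → ℝ) (F : ℝ → ℝ)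
    (hFn_meas : ∀ n x, Measurable fun ω => Fn n ω x)
    (hFn_mono : ∀ n ω, Monotone (Fn n ω))
    (hFn_rc : ∀ n ω x, ContinuousWithinAt (Fn n ω) (Set.Ici x) x)
    (hFn_bot : ∀ n ω, Tendsto (Fn n ω) atBot (nhds 0))
    (hFn_top : ∀ n ω, Tendsto (Fn n ω) atTop (nhds 1))
    (hF_mono : Monotone F)
    (hF_rc : ∀ x, ContinuousWithinAt F (Set.Ici x) x)
    (hF_bot : Tendsto F atBot (nhds 0))
    (hF_top : Tendsto F atTop (nhds 1))
    (h_pt : ∀ x : ℝ, ∀ ε > 0,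
      Tendsto (fun n => μ {ω | ε ≤ |Fn n ω x - F x|}) atTop (nhds 0))
    (h_left : ∀ x : ℝ, ∀ ε > 0,
      Tendsto (fun n => μ {ω | ε ≤ |leftLim (Fn n ω) x - leftLim F x|}) atTop (nhds 0)) :
    ∀ ε > 0,
      Tendsto (fun n => μ {ω | ε ≤ ⨆ x : ℝ, |Fn n ω x - F x|}) atTop (nhds 0) := by
  intro ε hε
  -- choose a grid size k with 1/k < ε/4
  obtain ⟨k0, hk0⟩ := exists_nat_gt (4 / ε)
  set k := max k0 2 with hkdef
  have hk2 : 2 ≤ k := le_max_right _ _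
  have hkpos : (0 : ℝ) < k := by
    have : (0 : ℕ) < k := by omega
    exact_mod_cast this
  have hk4 : 4 / ε < (k : ℝ) := lt_of_lt_of_le hk0 (by exact_mod_cast le_max_left k0 2)
  have hkε : 1 / (k : ℝ) < ε / 4 := by
    rw [div_lt_div_iff₀ hkpos (by norm_num)]
    have := (div_lt_iff₀ hε).mp hk4
    linarith
  -- the quantile grid
  set q : ℕ → ℝ := fun i => sInf {y | (i : ℝ) / k ≤ F y} with hq
  have hfrac_pos : ∀ i : ℕ, 1 ≤ i → (0 : ℝ) < i / k := by
    intro i hi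
    have : (0 : ℝ) < i := by exact_mod_cast hi
    positivity
  have hfrac_lt : ∀ i : ℕ, i ≤ k - 1 → (i : ℝ) / k < 1 := by
    intro i hi
    rw [div_lt_one hkpos]
    exact_mod_cast (by omega : i < k)
  have hSne : ∀ i : ℕ, i ≤ k - 1 → {y | (i : ℝ) / k ≤ F y}.Nonempty := fun i hi =>
    (hF_top.eventually (eventually_ge_nhds (hfrac_lt i hi))).exists
  have hSbdd : ∀ i : ℕ, 1 ≤ i → BddBelow {y | (i : ℝ) / k ≤ F y} := by
    intro i hi
    obtain ⟨b, hb⟩ := eventually_atBot.mp (hF_bot.eventually (eventually_lt_nhds (hfrac_pos i hi)))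
    exact ⟨b, fun z hz => le_of_not_gt fun h => absurd hz (not_le.mpr (hb z h.le))⟩
  have hq_ge : ∀ i : ℕ, 1 ≤ i → i ≤ k - 1 → (i : ℝ) / k ≤ F (q i) := by
    intro i h1 h2
    have hev : ∀ᶠ t in nhdsWithin (q i) (Set.Ioi (q i)), (i : ℝ) / k ≤ F t := by
      filter_upwards [self_mem_nhdsWithin] with t ht
      obtain ⟨z, hz, hzt⟩ := exists_lt_of_csInf_lt (hSne i h2) ht
      exact hz.trans (hF_mono hzt.le)
    have htd : Tendsto F (nhdsWithin (q i) (Set.Ioi (q i))) (nhds (F (q i))) :=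
      (hF_rc (q i)).mono_left (nhdsWithin_mono _ Set.Ioi_subset_Ici_self)
    exact ge_of_tendsto htd hev
  have hq_le : ∀ i : ℕ, 1 ≤ i → i ≤ k - 1 → leftLim F (q i) ≤ (i : ℝ) / k := by
    intro i h1 h2
    have hev : ∀ᶠ t in nhdsWithin (q i) (Set.Iio (q i)), F t ≤ (i : ℝ) / k := by
      filter_upwards [self_mem_nhdsWithin] with t ht
      by_contra h
      push_neg at h
      exact absurd (csInf_le (hSbdd i h1) h.le) (not_le.mpr ht)
    exact le_of_tendsto (hF_mono.tendsto_leftLim (q i)) hev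
  -- bounds for F and the Fn
  have hF0 : ∀ x, 0 ≤ F x := fun x => hF_mono.le_of_tendsto hF_bot x
  have hF1 : ∀ x, F x ≤ 1 := fun x => hF_mono.ge_of_tendsto hF_top x
  have hε2 : (0 : ℝ) < ε / 2 := by linarith
  set s : Finset ℕ := Finset.Icc 1 (k - 1) with hs
  -- inclusion of the bad event in a finite union of pointwise bad events
  have hsub : ∀ n, {ω | ε ≤ ⨆ x : ℝ, |Fn n ω x - F x|} ⊆
      ⋃ i ∈ s, ({ω | ε / 2 ≤ |Fn n ω (q i) - F (q i)|} ∪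
        {ω | ε / 2 ≤ |leftLim (Fn n ω) (q i) - leftLim F (q i)|}) := by
    intro n ω hω
    by_contra hnot
    simp only [Set.mem_iUnion, Set.mem_union, Set.mem_setOf_eq, exists_prop] at hnot
    push_neg at hnot
    have key : ∀ x, |Fn n ω x - F x| ≤ ε / 2 + 1 / k := fun x =>
      gc_pointwise_bound hF_mono (hFn_mono n ω) hF0
        (fun x => (hFn_mono n ω).le_of_tendsto (hFn_bot n ω) x) hF1
        (fun x => (hFn_mono n ω).ge_of_tendsto (hFn_top n ω) x) hk2 hq_ge hq_le
        (fun i h1 h2 => by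
          obtain ⟨ha, hb⟩ := hnot i (Finset.mem_Icc.mpr ⟨h1, h2⟩)
          exact ⟨ha.le, hb.le⟩) x
    have hsup : (⨆ x : ℝ, |Fn n ω x - F x|) ≤ ε / 2 + 1 / k := ciSup_le key
    have hωε : ε ≤ ⨆ x : ℝ, |Fn n ω x - F x| := hω
    linarith
  -- measure bound and squeeze
  have hbound : ∀ n, μ {ω | ε ≤ ⨆ x : ℝ, |Fn n ω x - F x|} ≤
      ∑ i ∈ s, (μ {ω | ε / 2 ≤ |Fn n ω (q i) - F (q i)|} +
        μ {ω | ε / 2 ≤ |leftLim (Fn n ω) (q i) - leftLim F (q i)|}) := fun n =>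
    (measure_mono (hsub n)).trans ((measure_biUnion_finset_le s _).trans
      (Finset.sum_le_sum fun i _ => measure_union_le _ _))
  have hsum : Tendsto (fun n => ∑ i ∈ s,
      (μ {ω | ε / 2 ≤ |Fn n ω (q i) - F (q i)|} +
        μ {ω | ε / 2 ≤ |leftLim (Fn n ω) (q i) - leftLim F (q i)|})) atTop (nhds 0) := by
    have := tendsto_finset_sum s
      (fun i _ => (h_pt (q i) (ε / 2) hε2).add (h_left (q i) (ε / 2) hε2))
    simpa using this
  exact tendsto_of_tendsto_of_tendsto_of_le_of_le tendsto_const_nhds hsum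
    (fun n => zero_le) hbound
end

section
/- Let h : S^m → ℝ be a symmetric measurable kernel with |h| ≤ 1, W_1, …, W_n i.i.d. S-valued random variables with m ≤ n, and V_{m,n} the associated V-statistic (average over all n^m tuples with repetition). If m² ≤ n (so that m = o(√n) holds along the sequence), then Var(V_{m,n}) ≤ 2m/n + 2m²/n³ + 4m²/n² + 8m³/n³. -/
open Finset

namespace VStatAux

variable {m n : ℕ}

/-- number of permutations of `Fin n` pulling the range of `t` into the first `m` coords. -/
def cnt (m n : ℕ) (t : Fin m → Fin n) : ℕ :=
  (Finset.univ.filter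
    (fun π : Equiv.Perm (Fin n) => ∀ i, ((π.symm (t i) : Fin n) : ℕ) < m)).card

lemma cond_iff (π : Equiv.Perm (Fin n)) (t : Fin m → Fin n) :
    (∀ i, ((π.symm (t i) : Fin n) : ℕ) < m) ↔
      ∀ x ∈ Finset.image t Finset.univ, ((π.symm x : Fin n) : ℕ) < m := by
  constructor
  · rintro hc x hx
    rcases Finset.mem_image.mp hx with ⟨i, -, rfl⟩
    exact hc i
  · intro hc i
    exact hc _ (Finset.mem_image_of_mem _ (Finset.mem_univ i))

lemma cnt_congr (t t' : Fin m → Fin n)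
    (hc : (Finset.image t Finset.univ).card = (Finset.image t' Finset.univ).card) :
    cnt m n t = cnt m n t' := by
  classical
  set A := Finset.image t Finset.univ with hA
  set A' := Finset.image t' Finset.univ with hA'
  have e : {x : Fin n // x ∈ A} ≃ {x : Fin n // x ∈ A'} := Finset.equivOfCardEq hc
  set ρ : Equiv.Perm (Fin n) := Equiv.extendSubtype e with hρdef
  have hρ : ∀ x ∈ A, ρ x ∈ A' := fun x hx => Equiv.extendSubtype_mem e x hx
  have himg : Finset.image ρ A = A' := by
    apply Finset.eq_of_subset_of_card_le
    · intro y hy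
      rcases Finset.mem_image.mp hy with ⟨x, hx, rfl⟩
      exact hρ x hx
    · rw [Finset.card_image_of_injective _ ρ.injective]
      exact hc.ge
  have hρ' : ∀ y ∈ A', ρ.symm y ∈ A := by
    intro y hy
    rw [← himg] at hy
    rcases Finset.mem_image.mp hy with ⟨x, hx, rfl⟩
    simpa using hx
  unfold cnt
  refine Finset.card_nbij' (i := fun π => π.trans ρ) (j := fun π => π.trans ρ.symm)
    ?_ ?_ ?_ ?_
  · intro π hπ
    rw [Finset.mem_coe, Finset.mem_filter] at hπ ⊢
    refine ⟨Finset.mem_univ _, ?_⟩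
    rw [cond_iff] at hπ ⊢
    intro x hx
    have hx2 : (π.trans ρ).symm x = π.symm (ρ.symm x) := rfl
    rw [hx2]
    exact hπ.2 _ (hρ' x hx)
  · intro π hπ
    rw [Finset.mem_coe, Finset.mem_filter] at hπ ⊢
    refine ⟨Finset.mem_univ _, ?_⟩
    rw [cond_iff] at hπ ⊢
    intro x hx
    have hx2 : (π.trans ρ.symm).symm x = π.symm (ρ x) := rfl
    rw [hx2]
    exact hπ.2 _ (hρ x hx)
  · intro π _
    ext x
    simp
  · intro π _
    ext x
    simp

lemma cnt_pos (hmn : m ≤ n) (t : Fin m → Fin n) : 0 < cnt m n t := by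
  classical
  set A := Finset.image t Finset.univ with hA
  have hk : A.card ≤ m := by
    calc A.card ≤ (Finset.univ : Finset (Fin m)).card := Finset.card_image_le
    _ = m := by simp
  set B : Finset (Fin n) :=
    Finset.image (fun x : Fin A.card => Fin.castLE (hk.trans hmn) x) Finset.univ with hB
  have hBcard : A.card = B.card := by
    rw [hB, Finset.card_image_of_injective _ (Fin.castLE_injective _)]
    simp
  have e : {x : Fin n // x ∈ A} ≃ {x : Fin n // x ∈ B} := Finset.equivOfCardEq hBcard
  set ρ : Equiv.Perm (Fin n) := Equiv.extendSubtype e with hρdef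
  have hρ : ∀ x ∈ A, ρ x ∈ B := fun x hx => Equiv.extendSubtype_mem e x hx
  rw [cnt]
  apply Finset.card_pos.mpr
  refine ⟨ρ.symm, Finset.mem_filter.mpr ⟨Finset.mem_univ _, ?_⟩⟩
  intro i
  have hti : t i ∈ A := Finset.mem_image_of_mem _ (Finset.mem_univ i)
  have : ρ.symm.symm (t i) = ρ (t i) := rfl
  rw [this]
  have := hρ _ hti
  rcases Finset.mem_image.mp this with ⟨y, -, hy⟩
  rw [← hy]
  simp only [Fin.coe_castLE]
  exact lt_of_lt_of_le y.isLt hk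

/-- the weight attached to a pattern `p`. -/
noncomputable def wgt (m n : ℕ) (hmn : m ≤ n) (p : Fin m → Fin m) : ℝ :=
  (((n : ℝ) ^ m) * cnt m n (fun i => Fin.castLE hmn (p i)))⁻¹

lemma wgt_nonneg (hmn : m ≤ n) (p : Fin m → Fin m) : 0 ≤ wgt m n hmn p := by
  rw [wgt]
  positivity

lemma master (hm : 1 ≤ m) (hmn : m ≤ n) (g : (Fin m → Fin n) → ℝ) :
    ∑ p : Fin m → Fin m, ∑ π : Equiv.Perm (Fin n),
        wgt m n hmn p * g (fun i => π (Fin.castLE hmn (p i)))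
      = ((n : ℝ) ^ m)⁻¹ * ∑ t : Fin m → Fin n, g t := by
  classical
  have hn : 1 ≤ n := hm.trans hmn
  have hn0 : (0 : ℝ) < (n : ℝ) ^ m := by
    have : (0:ℝ) < (n:ℝ) := by exact_mod_cast hn
    positivity
  set key : (Fin m → Fin m) × Equiv.Perm (Fin n) → (Fin m → Fin n) :=
    fun q => fun i => q.2 (Fin.castLE hmn (q.1 i)) with hkey
  have step1 : ∑ p : Fin m → Fin m, ∑ π : Equiv.Perm (Fin n),
        wgt m n hmn p * g (fun i => π (Fin.castLE hmn (p i)))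
      = ∑ q ∈ (Finset.univ ×ˢ Finset.univ :
          Finset ((Fin m → Fin m) × Equiv.Perm (Fin n))),
          wgt m n hmn q.1 * g (key q) := by
    rw [Finset.sum_product]
  rw [step1, ← Finset.sum_fiberwise (Finset.univ ×ˢ Finset.univ) key
      (fun q => wgt m n hmn q.1 * g (key q))]
  rw [Finset.mul_sum]
  apply Finset.sum_congr rfl
  intro t _
  -- the fiber over t
  set fib := (Finset.univ ×ˢ Finset.univ :
      Finset ((Fin m → Fin m) × Equiv.Perm (Fin n))).filter (fun q => key q = t) with hfib
  have hmem : ∀ q ∈ fib, key q = t := by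
    intro q hq
    exact (Finset.mem_filter.mp hq).2
  have hcard : fib.card = cnt m n t := by
    rw [cnt]
    apply Finset.card_nbij (i := fun q => q.2)
    · intro q hq
      have hkq := hmem q hq
      rw [Finset.mem_coe, Finset.mem_filter]
      refine ⟨Finset.mem_univ _, ?_⟩
      intro i
      have : t i = q.2 (Fin.castLE hmn (q.1 i)) := by rw [← hkq]
      rw [this, Equiv.symm_apply_apply]
      simp only [Fin.coe_castLE]
      exact (q.1 i).isLt
    · intro q hq q' hq' hqq'
      have hqf : key q = t := (Finset.mem_filter.mp (Finset.mem_coe.mp hq)).2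
      have hqf' : key q' = t := (Finset.mem_filter.mp (Finset.mem_coe.mp hq')).2
      have h2 : q.2 = q'.2 := hqq'
      have h1 : q.1 = q'.1 := by
        funext i
        have e1 : q.2 (Fin.castLE hmn (q.1 i)) = t i := by rw [← hqf]
        have e2 : q'.2 (Fin.castLE hmn (q'.1 i)) = t i := by rw [← hqf']
        rw [← h2] at e2
        have := q.2.injective (e1.trans e2.symm)
        exact Fin.castLE_injective hmn this
      exact Prod.ext h1 h2
    · intro π hπ
      have hπ' : ∀ i, ((π.symm (t i) : Fin n) : ℕ) < m :=
        (Finset.mem_filter.mp (Finset.mem_coe.mp hπ)).2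
      refine ⟨⟨fun i => ⟨((π.symm (t i) : Fin n) : ℕ), hπ' i⟩, π⟩,
        Finset.mem_coe.mpr (Finset.mem_filter.mpr ⟨by simp, ?_⟩), rfl⟩
      funext i
      have hcast : Fin.castLE hmn (⟨((π.symm (t i) : Fin n) : ℕ), hπ' i⟩ : Fin m)
          = π.symm (t i) := by
        apply Fin.ext
        simp
      simp only [hkey, hcast, Equiv.apply_symm_apply]
  have hwval : ∀ q ∈ fib, wgt m n hmn q.1 = (((n : ℝ) ^ m) * cnt m n t)⁻¹ := by
    intro q hq
    have hkq := hmem q hq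
    rw [wgt]
    have hcc : cnt m n (fun i => Fin.castLE hmn (q.1 i)) = cnt m n t := by
      apply cnt_congr
      have himg : Finset.image t Finset.univ
          = Finset.image q.2 (Finset.image (fun i => Fin.castLE hmn (q.1 i)) Finset.univ) := by
        rw [Finset.image_image]
        rw [← hkq]
        rfl
      rw [himg, Finset.card_image_of_injective _ q.2.injective]
    rw [hcc]
  have hcnt0 : (0:ℝ) < (cnt m n t : ℝ) := by exact_mod_cast cnt_pos hmn t
  calc ∑ q ∈ fib, wgt m n hmn q.1 * g (key q)
      = ∑ q ∈ fib, (((n : ℝ) ^ m) * cnt m n t)⁻¹ * g t := by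
        apply Finset.sum_congr rfl
        intro q hq
        rw [hwval q hq, hmem q hq]
    _ = (fib.card : ℝ) * ((((n : ℝ) ^ m) * cnt m n t)⁻¹ * g t) := by
        rw [Finset.sum_const, nsmul_eq_mul]
    _ = ((n : ℝ) ^ m)⁻¹ * g t := by
        rw [hcard]
        field_simp

end VStatAux


open MeasureTheory ProbabilityTheory

/-- Variance bound for the V-statistic: if `m² ≤ n` then
`Var(V_{m,n}) ≤ 2m/n + 2m²/n³ + 4m²/n² + 8m³/n³`. -/
theorem vstatistic_variance_bound
    {Ω S : Type*} [MeasurableSpace Ω] [MeasurableSpace S]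
    (μ : Measure Ω) [IsProbabilityMeasure μ]
    (W : ℕ → Ω → S) (hW : ∀ i, Measurable (W i))
    (hindep : iIndepFun W μ)
    (ν : Measure S) (hident : ∀ i, Measure.map (W i) μ = ν)
    (m n : ℕ) (hm : 1 ≤ m) (hmn : m ≤ n) (hm2 : m ^ 2 ≤ n)
    (h : (Fin m → S) → ℝ) (hmeas : Measurable h)
    (hsymm : ∀ (e : Equiv.Perm (Fin m)) (x : Fin m → S), h (x ∘ e) = h x)
    (hbdd : ∀ x, |h x| ≤ 1)
    (V : Ω → ℝ)
    (hV : ∀ ω, V ω = ((n : ℝ) ^ m)⁻¹ *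
      ∑ t : Fin m → Fin n, h (fun i => W (t i) ω)) :
    variance V μ ≤ 2 * m / n + 2 * (m : ℝ) ^ 2 / (n : ℝ) ^ 3
      + 4 * (m : ℝ) ^ 2 / (n : ℝ) ^ 2 + 8 * (m : ℝ) ^ 3 / (n : ℝ) ^ 3 := by
  classical
  have hn : 1 ≤ n := hm.trans hmn
  haveI : NeZero n := ⟨by omega⟩
  set b : ℕ := n / m with hbdef
  have hb1 : 1 ≤ b := (Nat.one_le_div_iff (by omega)).mpr hmn
  have hbR : (0 : ℝ) < (b : ℝ) := by exact_mod_cast hb1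
  have hbm : b * m ≤ n := by
    rw [hbdef]
    exact Nat.div_mul_le_self n m
  set w : (Fin m → Fin m) → ℝ := VStatAux.wgt m n hmn with hwdef
  have hw0 : ∀ p, 0 ≤ w p := fun p => VStatAux.wgt_nonneg hmn p
  set s : ℝ := ∑ p : Fin m → Fin m, w p with hsdef
  have hs0 : 0 ≤ s := Finset.sum_nonneg fun p _ => hw0 p
  -- blocks
  have hcb : ∀ (j : Fin b) (i : Fin m), (j : ℕ) * m + (i : ℕ) < n := by
    intro j i
    have hj : (j : ℕ) + 1 ≤ b := j.isLt
    have hi : (i : ℕ) < m := i.isLt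
    calc (j : ℕ) * m + (i : ℕ) < (j : ℕ) * m + m := by omega
      _ = ((j : ℕ) + 1) * m := by ring
      _ ≤ b * m := Nat.mul_le_mul_right m hj
      _ ≤ n := hbm
  set c : Fin b → Fin m → Fin n := fun j i => ⟨(j : ℕ) * m + (i : ℕ), hcb j i⟩ with hcdef
  -- kernels of each block
  set F : (Fin m → Fin n) → Ω → ℝ := fun t ω => h (fun i => W (t i) ω) with hFdef
  have hFmeas : ∀ t, Measurable (F t) :=
    fun t => hmeas.comp (measurable_pi_lambda _ fun i => hW _)
  have hFbdd : ∀ t ω, |F t ω| ≤ 1 := fun t ω => hbdd _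
  set K : Equiv.Perm (Fin n) → Fin b → Ω → ℝ :=
    fun π j ω => ∑ p : Fin m → Fin m, w p * F (fun i => π (c j (p i))) ω with hKdef
  have hKmeas : ∀ π j, Measurable (K π j) := by
    intro π j
    exact Finset.measurable_sum _ fun p _ => (hFmeas _).const_mul _
  have hKbdd : ∀ π j ω, |K π j ω| ≤ s := by
    intro π j ω
    calc |∑ p : Fin m → Fin m, w p * F (fun i => π (c j (p i))) ω|
        ≤ ∑ p : Fin m → Fin m, |w p * F (fun i => π (c j (p i))) ω| :=
          Finset.abs_sum_le_sum_abs _ _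
      _ ≤ ∑ p : Fin m → Fin m, w p := by
          apply Finset.sum_le_sum
          intro p _
          rw [abs_mul, abs_of_nonneg (hw0 p)]
          calc w p * |F (fun i => π (c j (p i))) ω| ≤ w p * 1 := by
                exact mul_le_mul_of_nonneg_left (hFbdd _ ω) (hw0 p)
            _ = w p := mul_one _
      _ = s := hsdef.symm
  have hK2 : ∀ π j, MemLp (K π j) 2 μ := fun π j =>
    MemLp.of_bound (hKmeas π j).aestronglyMeasurable s
      (Filter.Eventually.of_forall fun ω => by
        simpa [Real.norm_eq_abs] using hKbdd π j ω)
  -- pairwise independence of the blocks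
  have hdivm : ∀ (a i : ℕ), i < m → (a * m + i) / m = a := by
    intro a i hi
    rw [mul_comm, Nat.mul_add_div (by omega)]
    simp [Nat.div_eq_of_lt hi]
  have hKindep : ∀ (π : Equiv.Perm (Fin n)) (j j' : Fin b), j ≠ j' →
      IndepFun (K π j) (K π j') μ := by
    intro π j j' hjj'
    set Sj : Finset ℕ :=
      Finset.image (fun i : Fin m => ((π (c j i) : Fin n) : ℕ)) Finset.univ with hSj
    set Sj' : Finset ℕ :=
      Finset.image (fun i : Fin m => ((π (c j' i) : Fin n) : ℕ)) Finset.univ with hSj'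
    have hdisj : Disjoint Sj Sj' := by
      rw [Finset.disjoint_left]
      rintro x hx hx'
      rcases Finset.mem_image.mp hx with ⟨i, -, hi⟩
      rcases Finset.mem_image.mp hx' with ⟨i', -, hi'⟩
      have hππ : π (c j i) = π (c j' i') := by
        apply Fin.ext
        have h1 : ((π (c j i) : Fin n) : ℕ) = x := hi
        have h2 : ((π (c j' i') : Fin n) : ℕ) = x := hi'
        omega
      have hcc : c j i = c j' i' := π.injective hππ
      have hv : (j : ℕ) * m + (i : ℕ) = (j' : ℕ) * m + (i' : ℕ) := congrArg Fin.val hcc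
      apply hjj'
      apply Fin.ext
      have e1 : ((j : ℕ) * m + (i : ℕ)) / m = (j : ℕ) := hdivm _ _ i.isLt
      have e2 : ((j' : ℕ) * m + (i' : ℕ)) / m = (j' : ℕ) := hdivm _ _ i'.isLt
      rw [← e1, ← e2, hv]
    have hbase := hindep.indepFun_finset Sj Sj' hdisj hW
    set gj : ((x : Sj) → S) → ℝ := fun v => ∑ p : Fin m → Fin m, w p *
      h (fun i => v ⟨((π (c j (p i)) : Fin n) : ℕ),
        Finset.mem_image_of_mem _ (Finset.mem_univ (p i))⟩) with hgj
    set gj' : ((x : Sj') → S) → ℝ := fun v => ∑ p : Fin m → Fin m, w p *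
      h (fun i => v ⟨((π (c j' (p i)) : Fin n) : ℕ),
        Finset.mem_image_of_mem _ (Finset.mem_univ (p i))⟩) with hgj'
    have hgjmeas : Measurable gj := by
      apply Finset.measurable_sum
      intro p _
      exact (hmeas.comp (measurable_pi_lambda _ fun i => measurable_pi_apply _)).const_mul _
    have hgj'meas : Measurable gj' := by
      apply Finset.measurable_sum
      intro p _
      exact (hmeas.comp (measurable_pi_lambda _ fun i => measurable_pi_apply _)).const_mul _
    have hcomp : K π j = gj ∘ (fun a (i : Sj) => W i a) := rfl
    have hcomp' : K π j' = gj' ∘ (fun a (i : Sj') => W i a) := rfl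
    rw [hcomp, hcomp']
    exact hbase.comp hgjmeas hgj'meas
  -- variance of each block kernel
  have hKvar : ∀ π j, variance (K π j) μ ≤ s ^ 2 := by
    intro π j
    refine (variance_le_expectation_sq (hKmeas π j).aestronglyMeasurable).trans ?_
    have hint : Integrable ((K π j) ^ 2) μ := (hK2 π j).integrable_sq
    have hle : μ[(K π j) ^ 2] ≤ μ[fun _ => s ^ 2] := by
      apply integral_mono hint (integrable_const _)
      intro ω
      simp only [Pi.pow_apply]
      have h' := abs_le.mp (hKbdd π j ω)
      exact sq_le_sq' h'.1 h'.2
    simpa using hle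
  -- the average over one permutation
  set A : Equiv.Perm (Fin n) → Ω → ℝ :=
    fun π ω => ((b : ℝ))⁻¹ * ∑ j : Fin b, K π j ω with hAdef
  have hAmeas : ∀ π, Measurable (A π) :=
    fun π => (Finset.measurable_sum _ fun j _ => hKmeas π j).const_mul _
  have hAsmul : ∀ π, A π = ((b : ℝ))⁻¹ • (∑ j : Fin b, K π j) := by
    intro π
    funext ω
    simp [hAdef, Finset.sum_apply]
  have hAvar : ∀ π, variance (A π) μ ≤ s ^ 2 / b := by
    intro π
    rw [hAsmul π, variance_smul]
    have hsum : variance (∑ j : Fin b, K π j) μ = ∑ j : Fin b, variance (K π j) μ :=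
      IndepFun.variance_sum (fun j _ => hK2 π j)
        (fun j _ j' _ hjj' => hKindep π j j' hjj')
    rw [hsum]
    have hle : ∑ j : Fin b, variance (K π j) μ ≤ ∑ _j : Fin b, s ^ 2 :=
      Finset.sum_le_sum fun j _ => hKvar π j
    calc ((b : ℝ)⁻¹) ^ 2 * ∑ j : Fin b, variance (K π j) μ
        ≤ ((b : ℝ)⁻¹) ^ 2 * ((b : ℝ) * s ^ 2) := by
          apply mul_le_mul_of_nonneg_left _ (by positivity)
          simpa [Finset.sum_const, Finset.card_univ, nsmul_eq_mul] using hle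
      _ = s ^ 2 / b := by
          field_simp
  have hAbdd : ∀ π ω, |A π ω| ≤ s := by
    intro π ω
    rw [hAdef]
    simp only []
    rw [abs_mul, abs_of_nonneg (inv_nonneg.mpr hbR.le)]
    calc (b : ℝ)⁻¹ * |∑ j : Fin b, K π j ω|
        ≤ (b : ℝ)⁻¹ * ∑ j : Fin b, |K π j ω| := by
          apply mul_le_mul_of_nonneg_left (Finset.abs_sum_le_sum_abs _ _)
            (inv_nonneg.mpr hbR.le)
      _ ≤ (b : ℝ)⁻¹ * ∑ _j : Fin b, s := by
          apply mul_le_mul_of_nonneg_left (Finset.sum_le_sum fun j _ => hKbdd π j ω)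
            (inv_nonneg.mpr hbR.le)
      _ = (b : ℝ)⁻¹ * ((b : ℝ) * s) := by
          rw [Finset.sum_const, Finset.card_univ, Fintype.card_fin, nsmul_eq_mul]
      _ = s := by field_simp
  have hA2 : ∀ π, MemLp (A π) 2 μ := fun π =>
    MemLp.of_bound (hAmeas π).aestronglyMeasurable s
      (Filter.Eventually.of_forall fun ω => by
        simpa [Real.norm_eq_abs] using hAbdd π ω)
  have hAint : ∀ π, Integrable (A π) μ := fun π => (hA2 π).integrable one_le_two
  -- the translations τ_j
  have hτ : ∀ j : Fin b, ∃ τ : Equiv.Perm (Fin n),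
      ∀ i : Fin m, τ (Fin.castLE hmn i) = c j i := by
    intro j
    have hjm : (j : ℕ) * m < n := by
      have h0 : (j : ℕ) * m + 0 < n := hcb j ⟨0, by omega⟩
      omega
    refine ⟨Equiv.addLeft (⟨(j : ℕ) * m, hjm⟩ : Fin n), ?_⟩
    intro i
    apply Fin.ext
    rw [Equiv.coe_addLeft]
    rw [Fin.val_add]
    simp only [Fin.coe_castLE]
    exact Nat.mod_eq_of_lt (hcb j i)
  -- the master identity: V is the sum of the A π
  have hVsum : ∀ ω, V ω = ∑ π : Equiv.Perm (Fin n), A π ω := by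
    intro ω
    have hmaster : ∀ j : Fin b,
        ∑ π : Equiv.Perm (Fin n), ∑ p : Fin m → Fin m,
            w p * F (fun i => π (c j (p i))) ω
          = ((n : ℝ) ^ m)⁻¹ * ∑ t : Fin m → Fin n, F t ω := by
      intro j
      obtain ⟨τ, hτj⟩ := hτ j
      calc ∑ π : Equiv.Perm (Fin n), ∑ p : Fin m → Fin m,
            w p * F (fun i => π (c j (p i))) ω
          = ∑ π : Equiv.Perm (Fin n), ∑ p : Fin m → Fin m,
            w p * F (fun i => π (Fin.castLE hmn (p i))) ω := by
            apply Fintype.sum_equiv (Equiv.mulRight τ)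
            intro π
            apply Finset.sum_congr rfl
            intro p _
            congr 1
            congr 1
            funext i
            have : (π * τ) (Fin.castLE hmn (p i)) = π (τ (Fin.castLE hmn (p i))) := rfl
            rw [Equiv.coe_mulRight, this, hτj (p i)]
        _ = ∑ p : Fin m → Fin m, ∑ π : Equiv.Perm (Fin n),
            w p * F (fun i => π (Fin.castLE hmn (p i))) ω := Finset.sum_comm
        _ = ((n : ℝ) ^ m)⁻¹ * ∑ t : Fin m → Fin n, F t ω :=
            VStatAux.master hm hmn (fun t => F t ω)
    rw [hV ω]
    have hexpand : ∑ π : Equiv.Perm (Fin n), A π ω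
        = (b : ℝ)⁻¹ * ∑ j : Fin b, ∑ π : Equiv.Perm (Fin n), ∑ p : Fin m → Fin m,
            w p * F (fun i => π (c j (p i))) ω := by
      rw [← Finset.mul_sum]
      congr 1
      rw [Finset.sum_comm]
    rw [hexpand]
    have : ∑ j : Fin b, ∑ π : Equiv.Perm (Fin n), ∑ p : Fin m → Fin m,
            w p * F (fun i => π (c j (p i))) ω
        = (b : ℝ) * (((n : ℝ) ^ m)⁻¹ * ∑ t : Fin m → Fin n, F t ω) := by
      rw [Finset.sum_congr rfl fun j _ => hmaster j]
      rw [Finset.sum_const, Finset.card_univ, Fintype.card_fin, nsmul_eq_mul]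
    rw [this]
    rw [← mul_assoc, inv_mul_cancel₀ hbR.ne', one_mul]
  -- total mass of the weights
  set NR : ℕ := Fintype.card (Equiv.Perm (Fin n)) with hNRdef
  have hn0 : (0 : ℝ) < (n : ℝ) ^ m := by
    have : (0 : ℝ) < (n : ℝ) := by exact_mod_cast hn
    positivity
  have hNs : (NR : ℝ) * s = 1 := by
    have hmast := VStatAux.master hm hmn (fun _ => (1 : ℝ))
    simp only [mul_one] at hmast
    have hL : ∑ p : Fin m → Fin m, ∑ _π : Equiv.Perm (Fin n), w p
        = (NR : ℝ) * s := by
      rw [hsdef, Finset.mul_sum]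
      apply Finset.sum_congr rfl
      intro p _
      rw [Finset.sum_const, Finset.card_univ, nsmul_eq_mul, hNRdef]
    have hR : ((n : ℝ) ^ m)⁻¹ * ∑ _t : Fin m → Fin n, (1 : ℝ) = 1 := by
      rw [Finset.sum_const, Finset.card_univ, nsmul_eq_mul, mul_one]
      have : (Fintype.card (Fin m → Fin n) : ℝ) = (n : ℝ) ^ m := by
        rw [Fintype.card_fun]
        push_cast
        simp
      rw [this]
      exact inv_mul_cancel₀ hn0.ne'
    rw [← hL, hmast, hR]
  -- V is square integrable
  have hVmeasfun : V = fun ω => ∑ π : Equiv.Perm (Fin n), A π ω := funext hVsum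
  have hVmeas : Measurable V := by
    rw [hVmeasfun]
    exact Finset.measurable_sum _ fun π _ => hAmeas π
  have hVbdd : ∀ ω, |V ω| ≤ (NR : ℝ) * s := by
    intro ω
    rw [hVsum ω]
    calc |∑ π : Equiv.Perm (Fin n), A π ω|
        ≤ ∑ π : Equiv.Perm (Fin n), |A π ω| := Finset.abs_sum_le_sum_abs _ _
      _ ≤ ∑ _π : Equiv.Perm (Fin n), s := Finset.sum_le_sum fun π _ => hAbdd π ω
      _ = (NR : ℝ) * s := by
          rw [Finset.sum_const, Finset.card_univ, nsmul_eq_mul, hNRdef]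
  have hMemV : MemLp V 2 μ :=
    MemLp.of_bound hVmeas.aestronglyMeasurable ((NR : ℝ) * s)
      (Filter.Eventually.of_forall fun ω => by
        simpa [Real.norm_eq_abs] using hVbdd ω)
  -- centered variables
  set EA : Equiv.Perm (Fin n) → ℝ := fun π => μ[A π] with hEAdef
  have hEV : μ[V] = ∑ π : Equiv.Perm (Fin n), EA π := by
    rw [hVmeasfun]
    exact integral_finset_sum _ fun π _ => hAint π
  set B : Equiv.Perm (Fin n) → Ω → ℝ := fun π ω => A π ω - EA π with hBdef
  have hBmeas : ∀ π, Measurable (B π) := fun π => (hAmeas π).sub measurable_const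
  have hB2 : ∀ π, MemLp (B π) 2 μ := fun π => (hA2 π).sub (memLp_const _)
  have hBsq : ∀ π, ∫ ω, (B π ω) ^ 2 ∂μ = variance (A π) μ := by
    intro π
    rw [variance_eq_integral (hAmeas π).aemeasurable]
  have hBprodint : ∀ π ρ, Integrable (fun ω => B π ω * B ρ ω) μ := by
    intro π ρ
    apply Integrable.bdd_mul (c := s + s) ((hB2 ρ).integrable one_le_two)
      (hBmeas π).aestronglyMeasurable
    refine Filter.Eventually.of_forall fun ω => ?_
    rw [Real.norm_eq_abs, hBdef]
    have h1 := hAbdd π ω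
    have h2 : |EA π| ≤ s := by
      rw [hEAdef]
      calc |∫ ω, A π ω ∂μ| ≤ ∫ ω, |A π ω| ∂μ := by
            simpa [Real.norm_eq_abs] using norm_integral_le_integral_norm (A π) (μ := μ)
        _ ≤ ∫ _ω, s ∂μ := integral_mono (hAint π).abs (integrable_const _)
            fun ω => hAbdd π ω
        _ = s := by simp
    calc |A π ω - EA π| ≤ |A π ω| + |EA π| := abs_sub _ _
      _ ≤ s + s := add_le_add h1 h2
  -- the main estimate
  have hcenter : ∀ ω, V ω - μ[V] = ∑ π : Equiv.Perm (Fin n), B π ω := by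
    intro ω
    rw [hVsum ω, hEV, hBdef, Finset.sum_sub_distrib]
  have hVarV : variance V μ ≤ (NR : ℝ) ^ 2 * (s ^ 2 / b) := by
    have hfun : ((V - fun _ => μ[V] : Ω → ℝ) ^ 2)
        = fun ω => ∑ π : Equiv.Perm (Fin n), ∑ ρ : Equiv.Perm (Fin n), B π ω * B ρ ω := by
      funext ω
      have h1 : ((V - fun _ => μ[V] : Ω → ℝ) ^ 2) ω = (V ω - μ[V]) ^ 2 := rfl
      rw [h1, hcenter ω, sq, Finset.sum_mul_sum]
    rw [variance_eq_integral hVmeas.aemeasurable,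
      show (fun ω => (V ω - μ[V]) ^ 2) = ((V - fun _ => μ[V] : Ω → ℝ) ^ 2) from rfl, hfun]
    rw [integral_finset_sum _ (fun π _ => integrable_finset_sum _
      (fun ρ _ => hBprodint π ρ))]
    have hterm : ∀ π ρ : Equiv.Perm (Fin n),
        ∫ ω, B π ω * B ρ ω ∂μ ≤ s ^ 2 / b := by
      intro π ρ
      have hmono : ∫ ω, B π ω * B ρ ω ∂μ
          ≤ ∫ ω, ((B π ω) ^ 2 + (B ρ ω) ^ 2) / 2 ∂μ := by
        apply integral_mono (hBprodint π ρ)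
        · exact (((hB2 π).integrable_sq.add (hB2 ρ).integrable_sq).div_const 2)
        · intro ω
          show B π ω * B ρ ω ≤ (B π ω ^ 2 + B ρ ω ^ 2) / 2
          have hamgm : ∀ x y : ℝ, x * y ≤ (x ^ 2 + y ^ 2) / 2 := by
            intro x y
            nlinarith [sq_nonneg (x - y)]
          exact hamgm _ _
      have heq : ∫ ω, ((B π ω) ^ 2 + (B ρ ω) ^ 2) / 2 ∂μ
          = (variance (A π) μ + variance (A ρ) μ) / 2 := by
        rw [integral_div, integral_add (hB2 π).integrable_sq (hB2 ρ).integrable_sq]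
        rw [hBsq π, hBsq ρ]
      refine hmono.trans ?_
      rw [heq]
      have := hAvar π
      have := hAvar ρ
      linarith
    calc ∑ π : Equiv.Perm (Fin n), ∫ ω, ∑ ρ : Equiv.Perm (Fin n), B π ω * B ρ ω ∂μ
        = ∑ π : Equiv.Perm (Fin n), ∑ ρ : Equiv.Perm (Fin n), ∫ ω, B π ω * B ρ ω ∂μ := by
          apply Finset.sum_congr rfl
          intro π _
          exact integral_finset_sum _ fun ρ _ => hBprodint π ρ
      _ ≤ ∑ _π : Equiv.Perm (Fin n), ∑ _ρ : Equiv.Perm (Fin n), s ^ 2 / b := by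
          apply Finset.sum_le_sum
          intro π _
          exact Finset.sum_le_sum fun ρ _ => hterm π ρ
      _ = (NR : ℝ) ^ 2 * (s ^ 2 / b) := by
          rw [Finset.sum_const, Finset.sum_const, Finset.card_univ, nsmul_eq_mul,
            nsmul_eq_mul, hNRdef]
          ring
  have hfinal : variance V μ ≤ 1 / (b : ℝ) := by
    have hrw : (NR : ℝ) ^ 2 * (s ^ 2 / b) = ((NR : ℝ) * s) ^ 2 / b := by ring
    rw [hrw, hNs] at hVarV
    simpa using hVarV
  -- arithmetic: 1/b ≤ 2m/n ≤ RHS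
  have hmb : n ≤ 2 * (m * b) := by
    have h1 : m * b + n % m = n := by
      rw [hbdef]
      exact Nat.div_add_mod n m
    have h2 : n % m < m := Nat.mod_lt _ (by omega)
    have h3 : m ≤ m * b := Nat.le_mul_of_pos_right m (by omega)
    linarith
  have h2mn : (1 : ℝ) / (b : ℝ) ≤ 2 * m / n := by
    rw [div_le_div_iff₀ hbR (by exact_mod_cast Nat.lt_of_lt_of_le Nat.zero_lt_one hn)]
    have : ((n : ℝ)) ≤ 2 * (m * b) := by exact_mod_cast hmb
    calc (1 : ℝ) * n = (n : ℝ) := one_mul _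
      _ ≤ 2 * ((m : ℝ) * b) := this
      _ = 2 * m * b := by ring
  have hrest : (0 : ℝ) ≤ 2 * (m : ℝ) ^ 2 / (n : ℝ) ^ 3
      + 4 * (m : ℝ) ^ 2 / (n : ℝ) ^ 2 + 8 * (m : ℝ) ^ 3 / (n : ℝ) ^ 3 := by positivity
  linarith [hfinal, h2mn, hrest]
end

section
/- Let F, G be cumulative distribution functions on ℝ, fix ε > 0, and let m₀ be a positive integer with ε/m₀ − 1/m₀² > 0. Define x_{m₀,k} := inf{x : k/m₀ ≤ F(x)} for k = 1, …, m₀. If |G(x_{m₀,k}) − F(x_{m₀,k})| ≤ ½(ε/m₀ − 1/m₀²) and |G(x_{m₀,k}⁻) − F(x_{m₀,k}⁻)| ≤ ½(ε/m₀ − 1/m₀²) for all k, then sup_{x ∈ ℝ} |G(x) − F(x)| ≤ ε. -/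
open Function Filter

/-- Quantitative Glivenko–Cantelli step: if `G` is close to `F` at the quantile points
`x_{m₀,k} = inf{x : k/m₀ ≤ F x}` (and at their left limits) within `½(ε/m₀ - 1/m₀²)`,
then `G` is uniformly within `ε` of `F`. -/
theorem cdf_sup_le_of_close_at_quantiles
    (F G : ℝ → ℝ)
    (hF_mono : Monotone F) (hF_rc : ∀ x, ContinuousWithinAt F (Set.Ici x) x)
    (hF_bot : Tendsto F atBot (nhds 0)) (hF_top : Tendsto F atTop (nhds 1))
    (hG_mono : Monotone G) (hG_rc : ∀ x, ContinuousWithinAt G (Set.Ici x) x)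
    (hG_bot : Tendsto G atBot (nhds 0)) (hG_top : Tendsto G atTop (nhds 1))
    (ε : ℝ) (hε : 0 < ε)
    (m₀ : ℕ) (hm₀ : 1 ≤ m₀) (hεm : ε / m₀ - 1 / (m₀ : ℝ) ^ 2 > 0)
    (xq : ℕ → ℝ)
    (hxq : ∀ k, xq k = sInf {x : ℝ | (k : ℝ) / m₀ ≤ F x})
    (hclose : ∀ k, 1 ≤ k → k ≤ m₀ →
      |G (xq k) - F (xq k)| ≤ (1 / 2) * (ε / m₀ - 1 / (m₀ : ℝ) ^ 2))
    (hclose_left : ∀ k, 1 ≤ k → k ≤ m₀ →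
      |leftLim G (xq k) - leftLim F (xq k)| ≤ (1 / 2) * (ε / m₀ - 1 / (m₀ : ℝ) ^ 2)) :
    ∀ x : ℝ, |G x - F x| ≤ ε := by
  intro x
  have hma : (0:ℝ) < m₀ := by exact_mod_cast Nat.lt_of_lt_of_le Nat.zero_lt_one hm₀
  have hm1 : (1:ℝ) ≤ m₀ := by exact_mod_cast hm₀
  obtain ⟨δ, hδdef⟩ : ∃ δ : ℝ, δ = ε / m₀ - 1 / (m₀ : ℝ) ^ 2 := ⟨_, rfl⟩
  rw [← hδdef] at hεm hclose hclose_left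
  have key : (m₀:ℝ) * δ = ε - 1/m₀ := by
    rw [hδdef]; field_simp
  have hδpos : (0:ℝ) < δ := hεm
  have hmd : (0:ℝ) < (m₀:ℝ) * δ := mul_pos hma hδpos
  have hεgt : 1/(m₀:ℝ) < ε := by rw [key] at hmd; linarith
  have hδm : δ ≤ (m₀:ℝ) * δ := le_mul_of_one_le_left hδpos.le hm1
  have hmain : 1/(m₀:ℝ) + δ/2 ≤ ε := by
    rw [key] at hδm; linarith
  -- Boundedness of F and G between 0 and 1
  have hbd : ∀ (H : ℝ → ℝ), Monotone H → Tendsto H atBot (nhds 0) →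
      Tendsto H atTop (nhds 1) → ∀ y, 0 ≤ H y ∧ H y ≤ 1 := by
    intro H Hmono Hbot Htop y
    constructor
    · refine le_of_tendsto Hbot ?_
      filter_upwards [eventually_le_atBot y] with z hz using Hmono hz
    · refine ge_of_tendsto Htop ?_
      filter_upwards [eventually_ge_atTop y] with z hz using Hmono hz
  have hF0 : ∀ y, 0 ≤ F y := fun y => (hbd F hF_mono hF_bot hF_top y).1
  have hF1 : ∀ y, F y ≤ 1 := fun y => (hbd F hF_mono hF_bot hF_top y).2
  have hG0 : ∀ y, 0 ≤ G y := fun y => (hbd G hG_mono hG_bot hG_top y).1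
  have hG1 : ∀ y, G y ≤ 1 := fun y => (hbd G hG_mono hG_bot hG_top y).2
  -- quantile sets
  let S : ℕ → Set ℝ := fun k => {x : ℝ | (k : ℝ) / m₀ ≤ F x}
  have hSbdd : ∀ k : ℕ, 1 ≤ k → BddBelow (S k) := by
    intro k hk
    have hpos : (0:ℝ) < (k:ℝ)/m₀ := by
      apply div_pos _ hma
      exact_mod_cast Nat.lt_of_lt_of_le Nat.zero_lt_one hk
    obtain ⟨y, hy⟩ := (hF_bot.eventually (gt_mem_nhds hpos)).exists
    refine ⟨y, fun z hz => ?_⟩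
    by_contra h
    push_neg at h
    exact absurd (le_trans hz (hF_mono h.le)) (not_le.mpr hy)
  have hSne : ∀ k : ℕ, (k:ℝ)/m₀ < 1 → (S k).Nonempty := by
    intro k hk
    obtain ⟨y, hy⟩ := (hF_top.eventually (lt_mem_nhds hk)).exists
    exact ⟨y, hy.le⟩
  -- F at the quantile point is at least k/m₀
  have hFq : ∀ k : ℕ, 1 ≤ k → (S k).Nonempty → (k:ℝ)/m₀ ≤ F (sInf (S k)) := by
    intro k hk hne
    have htend : Tendsto F (nhdsWithin (sInf (S k)) (Set.Ioi (sInf (S k))))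
        (nhds (F (sInf (S k)))) :=
      (hF_rc (sInf (S k))).mono_left (nhdsWithin_mono _ Set.Ioi_subset_Ici_self)
    refine ge_of_tendsto htend ?_
    refine eventually_nhdsWithin_of_forall (fun u hu => ?_)
    obtain ⟨z, hzS, hzu⟩ := (csInf_lt_iff (hSbdd k hk) hne).mp hu
    exact le_trans hzS (hF_mono hzu.le)
  -- left limit of F at the quantile point is at most k/m₀
  have hFleft : ∀ k : ℕ, 1 ≤ k → (S k).Nonempty → leftLim F (sInf (S k)) ≤ (k:ℝ)/m₀ := by
    intro k hk hne
    refine le_of_tendsto (hF_mono.tendsto_leftLim (sInf (S k))) ?_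
    refine eventually_nhdsWithin_of_forall (fun u hu => ?_)
    have : u ∉ S k := notMem_of_lt_csInf hu (hSbdd k hk)
    simp only [S, Set.mem_setOf_eq, not_le] at this
    exact this.le
  -- Now the main argument for the given x
  obtain ⟨k, hkdef⟩ : ∃ k : ℕ, k = ⌊(m₀:ℝ) * F x⌋₊ := ⟨_, rfl⟩
  have hk0 : (0:ℝ) ≤ (m₀:ℝ) * F x := mul_nonneg hma.le (hF0 x)
  have hfloor1 : (k:ℝ) ≤ (m₀:ℝ) * F x := by rw [hkdef]; exact Nat.floor_le hk0
  have hfloor2 : (m₀:ℝ) * F x < (k:ℝ) + 1 := by rw [hkdef]; exact Nat.lt_floor_add_one _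
  have hkm : k ≤ m₀ := by
    rw [hkdef]
    have : ⌊(m₀:ℝ) * F x⌋₊ ≤ ⌊((m₀:ℕ):ℝ)⌋₊ := by
      apply Nat.floor_le_floor
      calc (m₀:ℝ) * F x ≤ (m₀:ℝ) * 1 := by
            exact mul_le_mul_of_nonneg_left (hF1 x) hma.le
        _ = ((m₀:ℕ):ℝ) := by ring
    simpa [Nat.floor_natCast] using this
  have hFxlb : (k:ℝ)/m₀ ≤ F x := by rw [div_le_iff₀ hma]; linarith
  have hFxub : F x < ((k:ℝ)+1)/m₀ := by rw [lt_div_iff₀ hma]; linarith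
  -- Lower bound on G x
  have hGlb : (k:ℝ)/m₀ - δ/2 ≤ G x := by
    rcases Nat.eq_zero_or_pos k with hk | hk
    · rw [hk]
      simp only [Nat.cast_zero, zero_div]
      linarith [hG0 x, hδpos]
    · have hne : (S k).Nonempty := ⟨x, hFxlb⟩
      have hinfle : sInf (S k) ≤ x := csInf_le (hSbdd k hk) hFxlb
      have h1 : (k:ℝ)/m₀ ≤ F (sInf (S k)) := hFq k hk hne
      have h2 := hclose k hk hkm
      rw [hxq k] at h2
      have h3 : -(1/2*δ) ≤ G (sInf (S k)) - F (sInf (S k)) := (abs_le.mp h2).1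
      have h4 : G (sInf (S k)) ≤ G x := hG_mono hinfle
      linarith
  -- Case distinction for the upper bound
  by_cases hcase : k + 1 ≤ m₀ ∧ (S (k+1)).Nonempty
  · obtain ⟨hk1m, hne⟩ := hcase
    have hcast : ((k+1 : ℕ):ℝ) = (k:ℝ) + 1 := by push_cast; ring
    -- x is strictly below the (k+1)-st quantile
    have hxlb : ∀ z ∈ S (k+1), x ≤ z := by
      intro z hz
      by_contra h
      push_neg at h
      have : ((k+1:ℕ):ℝ)/m₀ ≤ F x := le_trans hz (hF_mono h.le)
      rw [hcast] at this
      linarith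
    have hle : x ≤ sInf (S (k+1)) := le_csInf hne hxlb
    have hFq1 : ((k+1:ℕ):ℝ)/m₀ ≤ F (sInf (S (k+1))) := hFq (k+1) (Nat.succ_le_succ (Nat.zero_le k)) hne
    have hne' : x ≠ sInf (S (k+1)) := by
      intro h
      rw [← h, hcast] at hFq1
      linarith
    have hlt : x < sInf (S (k+1)) := lt_of_le_of_ne hle hne'
    -- Upper bound on G x
    have hGub : G x ≤ ((k:ℝ)+1)/m₀ + δ/2 := by
      have h1 : G x ≤ leftLim G (sInf (S (k+1))) := hG_mono.le_leftLim hlt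
      have h2 := hclose_left (k+1) (Nat.succ_le_succ (Nat.zero_le k)) hk1m
      rw [hxq (k+1)] at h2
      have h3 : leftLim G (sInf (S (k+1))) - leftLim F (sInf (S (k+1))) ≤ 1/2*δ :=
        (abs_le.mp h2).2
      have h4 : leftLim F (sInf (S (k+1))) ≤ ((k+1:ℕ):ℝ)/m₀ :=
        hFleft (k+1) (Nat.succ_le_succ (Nat.zero_le k)) hne
      rw [hcast] at h4
      linarith
    have hsplit : ((k:ℝ)+1)/m₀ = (k:ℝ)/m₀ + 1/m₀ := by ring
    rw [abs_le]
    constructor <;> linarith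
  · -- In this case k+1 ≥ m₀ (either directly, or via emptiness), so F x and G x are near 1
    have hk1 : (m₀:ℝ) ≤ (k:ℝ) + 1 := by
      rcases not_and_or.mp hcase with h | h
      · push_neg at h
        have : (m₀:ℝ) ≤ (k:ℝ) := by exact_mod_cast Nat.le_of_lt_succ (Nat.lt_succ_of_le (Nat.le_of_lt_succ h))
        linarith
      · by_contra hc
        push_neg at hc
        apply h
        apply hSne
        rw [div_lt_one hma]
        push_cast
        linarith
    have hkd : 1 - 1/(m₀:ℝ) ≤ (k:ℝ)/m₀ := by
      rw [le_div_iff₀ hma]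
      have : (1 - 1/(m₀:ℝ)) * m₀ = m₀ - 1 := by field_simp
      linarith
    rw [abs_le]
    constructor
    · linarith [hF1 x, hG1 x, hεgt, hmain]
    · linarith [hF1 x, hG1 x, hεgt, hmain]
end
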